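/- Let 𝒩 be a connected plane Euclidean network. Then the following are equivalent: (a) for every pair of diametral vertices u, v of 𝒩_ℓ (vertices with d(u,v) = diam(𝒩_ℓ)), the segment with endpoints u and v is not contained in 𝒩_ℓ; (b) diam(CH(𝒩_ℓ)) < diam(𝒩_ℓ). -/

import Mathlib

open Set
open scoped ENNReal

noncomputable section

attribute [local instance] Classical.propDecidable

/-- Points of the Euclidean plane. -/
abbrev Pt : Type := EuclideanSpace ℝ (Fin 2)

/-- Intrinsic (geodesic) distance inside a set `X ⊆ ℝ²`: the infimum of the lengths
(total variations) of continuous paths from `p` to `q` whose image lies in `X`. -/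
def idist (X : Set Pt) (p q : Pt) : ℝ≥0∞ :=
  ⨅ (γ : ℝ → Pt) (_ : ContinuousOn γ (Set.Icc 0 1)) (_ : γ '' Set.Icc 0 1 ⊆ X)
    (_ : γ 0 = p) (_ : γ 1 = q), eVariationOn γ (Set.Icc 0 1)

/-- Eccentricity of a point within `X`. -/
def ecc (X : Set Pt) (p : Pt) : ℝ≥0∞ := ⨆ q ∈ X, idist X p q

/-- Intrinsic diameter of `X`. -/
def idiam (X : Set Pt) : ℝ≥0∞ := ⨆ p ∈ X, ecc X p

/-- A plane Euclidean network: a finite set of vertices in the plane together with a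
finite set of straight-line edges (recorded as ordered pairs of distinct vertices, each
edge recorded exactly once), such that two distinct edges meet only in common endpoints. -/
structure PlaneNetwork where
  V : Finset Pt
  Edg : Finset (Pt × Pt)
  ends_mem : ∀ e ∈ Edg, e.1 ∈ V ∧ e.2 ∈ V
  ends_ne : ∀ e ∈ Edg, e.1 ≠ e.2
  no_swap : ∀ e ∈ Edg, (e.2, e.1) ∉ Edg
  vertex_cover : ∀ v ∈ V, ∃ e ∈ Edg, v = e.1 ∨ v = e.2
  plane : ∀ e ∈ Edg, ∀ f ∈ Edg, e ≠ f →
    segment ℝ e.1 e.2 ∩ segment ℝ f.1 f.2 ⊆ ({e.1, e.2} ∩ {f.1, f.2} : Set Pt)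

namespace PlaneNetwork

/-- The locus of a network: the union of all its (closed) edges. -/
def locus (N : PlaneNetwork) : Set Pt := ⋃ e ∈ N.Edg, segment ℝ e.1 e.2

/-- A network is connected when its locus is path-connected. -/
def Connected (N : PlaneNetwork) : Prop := IsPathConnected N.locus

/-- `u` and `v` are joined by an edge of the network. -/
def IsEdge (N : PlaneNetwork) (u v : Pt) : Prop := (u, v) ∈ N.Edg ∨ (v, u) ∈ N.Edg

/-- A vertex is pendant if it is an endpoint of exactly one edge. -/
def IsPendantVertex (N : PlaneNetwork) (v : Pt) : Prop :=
  v ∈ N.V ∧ (N.Edg.filter (fun e => e.1 = v ∨ e.2 = v)).card = 1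

/-- The number of pendant vertices of a network. -/
def pendantCount (N : PlaneNetwork) : ℕ := (N.V.filter fun v => N.IsPendantVertex v).card

end PlaneNetwork

/-- The union of a set with all the segments in a list. -/
def insertSegs (X : Set Pt) (L : List (Pt × Pt)) : Set Pt :=
  X ∪ ⋃ s ∈ L, segment ℝ s.1 s.2

/-- The segments of the list are inserted iteratively: the endpoints of the first one lie
on `X`, and the endpoints of each subsequent segment lie on the union of `X` with the
previously inserted segments. -/
def ValidSegs (X : Set Pt) : List (Pt × Pt) → Prop
  | [] => True
  | s :: rest => s.1 ∈ X ∧ s.2 ∈ X ∧ ValidSegs (X ∪ segment ℝ s.1 s.2) rest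

/-- A shortcut set for `X`: a finite sequence of iteratively inserted segments whose
insertion strictly decreases the intrinsic diameter. -/
def IsShortcutSet (X : Set Pt) (L : List (Pt × Pt)) : Prop :=
  ValidSegs X L ∧ idiam (insertSegs X L) < idiam X

/-- `X` admits a shortcut set. -/
def HasShortcutSet (X : Set Pt) : Prop := ∃ L, IsShortcutSet X L

/-- The shortcut number: the minimum size of a shortcut set. -/
def scn (X : Set Pt) : ℕ :=
  sInf {k | ∃ L : List (Pt × Pt), L.length = k ∧ IsShortcutSet X L}


section Aux
open scoped RealInnerProductSpace

lemma edist_le_idist (X : Set Pt) (p q : Pt) : edist p q ≤ idist X p q := by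
  refine le_iInf fun γ => le_iInf fun _ => le_iInf fun _ => le_iInf fun h0 => le_iInf fun h1 => ?_
  rw [← h0, ← h1]
  exact eVariationOn.edist_le γ (by simp : (0:ℝ) ∈ Set.Icc (0:ℝ) 1)
    (by simp : (1:ℝ) ∈ Set.Icc (0:ℝ) 1)

lemma lipschitz_lineMap (u v : Pt) : LipschitzWith ‖v - u‖₊ (AffineMap.lineMap u v : ℝ → Pt) := by
  apply LipschitzWith.of_dist_le_mul
  intro s t
  rw [dist_lineMap_lineMap]
  rw [coe_nnnorm, ← dist_eq_norm, dist_comm v u]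
  ring_nf
  exact le_rfl

lemma idist_le_edist_of_segment_subset {X : Set Pt} {u v : Pt}
    (h : segment ℝ u v ⊆ X) : idist X u v ≤ edist u v := by
  have himg : (AffineMap.lineMap u v : ℝ → Pt) '' Set.Icc 0 1 = segment ℝ u v :=
    (segment_eq_image_lineMap ℝ u v).symm
  have hle : idist X u v ≤ eVariationOn (AffineMap.lineMap u v : ℝ → Pt) (Set.Icc 0 1) := by
    refine iInf_le_of_le (AffineMap.lineMap u v : ℝ → Pt) ?_
    refine iInf_le_of_le ((lipschitz_lineMap u v).continuous.continuousOn) ?_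
    refine iInf_le_of_le (himg ▸ h) ?_
    refine iInf_le_of_le (by simp) ?_
    exact iInf_le_of_le (by simp) le_rfl
  refine hle.trans ?_
  have h2 : eVariationOn (AffineMap.lineMap u v : ℝ → Pt) (Set.Icc 0 1)
      ≤ ‖v - u‖₊ * eVariationOn (id : ℝ → ℝ) (Set.Icc 0 1) := by
    have := ((lipschitz_lineMap u v).lipschitzOnWith (s := Set.univ)).comp_eVariationOn_le
      (g := (id : ℝ → ℝ)) (s := Set.Icc 0 1) (Set.mapsTo_univ _ _)
    simpa using this
  have h3 : eVariationOn (id : ℝ → ℝ) (Set.Icc 0 1) ≤ 1 := by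
    have := (monotoneOn_id (s := Set.Icc (0:ℝ) 1)).eVariationOn_le
      (Set.left_mem_Icc.2 zero_le_one) (Set.right_mem_Icc.2 zero_le_one)
    simpa using this
  calc eVariationOn (AffineMap.lineMap u v : ℝ → Pt) (Set.Icc 0 1)
      ≤ ‖v - u‖₊ * eVariationOn (id : ℝ → ℝ) (Set.Icc 0 1) := h2
    _ ≤ ‖v - u‖₊ * 1 := by exact mul_le_mul_right h3 _
    _ = edist u v := by rw [mul_one, edist_comm, edist_eq_enorm_sub, enorm_eq_nnnorm]

lemma idist_le_idiam {X : Set Pt} {p q : Pt} (hp : p ∈ X) (hq : q ∈ X) :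
    idist X p q ≤ idiam X := by
  calc idist X p q ≤ ecc X p := le_biSup _ hq
    _ ≤ idiam X := le_biSup _ hp

set_option maxHeartbeats 1000000 in
lemma segment_subset_of_idist_le {X : Set Pt} (hX : IsClosed X) {u v : Pt}
    (h : idist X u v ≤ edist u v) : segment ℝ u v ⊆ X := by
  rw [segment_eq_image_lineMap]
  rintro m ⟨t, ht, rfl⟩
  by_contra hm
  obtain ⟨δ, hδ, hball⟩ : ∃ δ > 0, Metric.ball (AffineMap.lineMap u v t : Pt) δ ⊆ Xᶜ :=
    Metric.isOpen_iff.1 hX.isOpen_compl _ hm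
  set m : Pt := (AffineMap.lineMap u v t : Pt) with hm_def
  set w : Pt := v - u with hw
  set L : ℝ := ‖w‖ with hL
  set A : ℝ := Real.sqrt ((t*L)^2 + δ^2) with hA
  set B : ℝ := Real.sqrt (((1-t)*L)^2 + δ^2) with hB
  have hmu : m - u = t • w := by
    simp [hm_def, AffineMap.lineMap_apply, hw]
  have hvm : v - m = (1-t) • w := by
    rw [hm_def, AffineMap.lineMap_apply_module, hw]
    module
  have key : ENNReal.ofReal (A + B) ≤ idist X u v := by
    refine le_iInf fun γ => le_iInf fun hcont => le_iInf fun him => le_iInf fun h0 =>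
      le_iInf fun h1 => ?_
    have hg : ContinuousOn (fun s : ℝ => ⟪γ s - u, w⟫) (Set.Icc 0 1) :=
      (hcont.sub continuousOn_const).inner continuousOn_const
    have hmem : t * L^2 ∈ Set.Icc (⟪γ 0 - u, w⟫) (⟪γ 1 - u, w⟫) := by
      rw [h0, h1]
      simp only [sub_self, inner_zero_left]
      rw [show v - u = w from rfl, real_inner_self_eq_norm_sq, ← hL]
      constructor
      · exact mul_nonneg ht.1 (sq_nonneg L)
      · nlinarith [sq_nonneg L, ht.2]
    obtain ⟨s, hs, hgs⟩ := intermediate_value_Icc zero_le_one hg hmem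
    set x : Pt := γ s with hx
    have hgs' : ⟪x - u, w⟫ = t * L^2 := hgs
    have hxX : x ∈ X := him ⟨s, hs, rfl⟩
    have hxm : δ ≤ dist x m := by
      by_contra hc
      exact (hball (Metric.mem_ball.2 (lt_of_not_ge hc))) hxX
    have horth : ⟪x - m, w⟫ = 0 := by
      have hxmw : x - m = (x - u) - t • w := by rw [← hmu]; abel
      rw [hxmw, inner_sub_left, real_inner_smul_left, hgs',
        real_inner_self_eq_norm_sq, ← hL]
      ring
    have hAx : A ≤ dist u x := by
      have hdec : x - u = (x - m) + t • w := by rw [← hmu]; abel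
      have hsq : ‖x - u‖^2 = ‖x - m‖^2 + (t*L)^2 := by
        rw [hdec, norm_add_sq_real, real_inner_smul_right, horth,
          norm_smul, Real.norm_eq_abs, abs_of_nonneg ht.1, ← hL]
        ring
      rw [dist_comm, dist_eq_norm, ← Real.sqrt_sq (norm_nonneg (x - u)), hsq]
      apply Real.sqrt_le_sqrt
      have hd : δ ≤ ‖x - m‖ := by rwa [← dist_eq_norm]
      nlinarith [norm_nonneg (x - m)]
    have hBx : B ≤ dist x v := by
      have hdec : v - x = (m - x) + (1-t) • w := by rw [← hvm]; abel
      have hmxw : ⟪m - x, w⟫ = 0 := by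
        rw [← neg_sub x m, inner_neg_left, horth, neg_zero]
      have hsq : ‖v - x‖^2 = ‖x - m‖^2 + ((1-t)*L)^2 := by
        rw [hdec, norm_add_sq_real, real_inner_smul_right, hmxw,
          norm_smul, Real.norm_eq_abs, abs_of_nonneg (by linarith [ht.2] : (0:ℝ) ≤ 1 - t),
          ← hL, norm_sub_rev m x]
        ring
      rw [dist_comm, dist_eq_norm, ← Real.sqrt_sq (norm_nonneg (v - x)), hsq]
      apply Real.sqrt_le_sqrt
      have hd : δ ≤ ‖x - m‖ := by rwa [← dist_eq_norm]
      nlinarith [norm_nonneg (x - m)]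
    have e1 : edist u x ≤ eVariationOn γ (Set.Icc 0 1 ∩ Set.Icc 0 s) := by
      rw [← h0, hx]
      exact eVariationOn.edist_le γ ⟨⟨le_rfl, zero_le_one⟩, ⟨le_rfl, hs.1⟩⟩
        ⟨hs, ⟨hs.1, le_rfl⟩⟩
    have e2 : edist x v ≤ eVariationOn γ (Set.Icc 0 1 ∩ Set.Icc s 1) := by
      rw [← h1, hx]
      exact eVariationOn.edist_le γ ⟨hs, ⟨le_rfl, hs.2⟩⟩
        ⟨⟨zero_le_one, le_rfl⟩, ⟨hs.2, le_rfl⟩⟩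
    have esum := eVariationOn.Icc_add_Icc γ (s := Set.Icc (0:ℝ) 1) hs.1 hs.2 hs
    calc ENNReal.ofReal (A + B) = ENNReal.ofReal A + ENNReal.ofReal B :=
          ENNReal.ofReal_add (Real.sqrt_nonneg _) (Real.sqrt_nonneg _)
      _ ≤ edist u x + edist x v := by
          rw [edist_dist, edist_dist]
          exact add_le_add (ENNReal.ofReal_le_ofReal hAx) (ENNReal.ofReal_le_ofReal hBx)
      _ ≤ eVariationOn γ (Set.Icc 0 1 ∩ Set.Icc 0 s)
            + eVariationOn γ (Set.Icc 0 1 ∩ Set.Icc s 1) := add_le_add e1 e2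
      _ = eVariationOn γ (Set.Icc 0 1) := by rw [esum, Set.inter_self]
  have hfin : A + B ≤ L := by
    have h2 := key.trans h
    rw [edist_dist] at h2
    have hL' : dist u v = L := by rw [hL, hw, dist_eq_norm, norm_sub_rev]
    rw [hL'] at h2
    exact (ENNReal.ofReal_le_ofReal_iff (norm_nonneg w)).1 h2
  have hLnn : (0:ℝ) ≤ L := norm_nonneg w
  have hA' : t * L < A := by
    rw [hA, Real.lt_sqrt (mul_nonneg ht.1 hLnn)]
    nlinarith [hδ]
  have hB' : (1-t) * L ≤ B := by
    rw [hB, Real.le_sqrt (mul_nonneg (by linarith [ht.2] : (0:ℝ) ≤ 1 - t) hLnn)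
      (by positivity)]
    nlinarith
  nlinarith

lemma PlaneNetwork.mem_locus_of_mem_V (N : PlaneNetwork) {u : Pt} (hu : u ∈ N.V) :
    u ∈ N.locus := by
  obtain ⟨e, he, hor⟩ := N.vertex_cover u hu
  refine Set.mem_iUnion₂.2 ⟨e, he, ?_⟩
  rcases hor with h | h
  · rw [h]; exact left_mem_segment ℝ e.1 e.2
  · rw [h]; exact right_mem_segment ℝ e.1 e.2

lemma PlaneNetwork.isCompact_locus (N : PlaneNetwork) : IsCompact N.locus := by
  refine N.Edg.finite_toSet.isCompact_biUnion fun e _ => ?_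
  rw [segment_eq_image_lineMap]
  exact isCompact_Icc.image (lipschitz_lineMap e.1 e.2).continuous

lemma PlaneNetwork.exists_vertex_ge (N : PlaneNetwork) {p : Pt} (hp : p ∈ N.locus)
    (q : Pt) : ∃ u ∈ N.V, dist p q ≤ dist u q := by
  obtain ⟨e, he, hpe⟩ := Set.mem_iUnion₂.1 hp
  have hmax := (convexOn_dist q convex_univ).le_max_of_mem_segment
    (Set.mem_univ e.1) (Set.mem_univ e.2) hpe
  rcases le_total (dist e.1 q) (dist e.2 q) with hle | hle
  · exact ⟨e.2, (N.ends_mem e he).2, by simpa [max_eq_right hle] using hmax⟩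
  · exact ⟨e.1, (N.ends_mem e he).1, by simpa [max_eq_left hle] using hmax⟩

end Aux

set_option maxHeartbeats 1000000 in
/-- For a connected plane Euclidean network, no segment joining diametral
vertices is contained in the locus iff the Euclidean diameter of the convex hull of the
locus is strictly smaller than the intrinsic diameter of the locus. -/
theorem stmt1 (N : PlaneNetwork) (hconn : N.Connected) :
    (∀ u ∈ N.V, ∀ v ∈ N.V, idist N.locus u v = idiam N.locus →
        ¬segment ℝ u v ⊆ N.locus) ↔
      EMetric.diam (convexHull ℝ N.locus) < idiam N.locus := by
  constructor
  · intro h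
    show Metric.ediam (convexHull ℝ N.locus) < _
    rw [convexHull_ediam]
    by_contra hnot
    push_neg at hnot
    have hcomp := N.isCompact_locus
    have hpc : IsPathConnected N.locus := hconn
    obtain ⟨b, hb, -⟩ := hpc
    have hne : N.locus.Nonempty := ⟨b, hb⟩
    obtain ⟨⟨p, q⟩, hpq, hmax⟩ := (hcomp.prod hcomp).exists_isMaxOn (hne.prod hne)
      (continuous_dist.continuousOn : ContinuousOn (fun z : Pt × Pt => dist z.1 z.2) _)
    obtain ⟨hp, hq⟩ := hpq
    obtain ⟨u, hu, hup⟩ := N.exists_vertex_ge hp q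
    have hu' : u ∈ N.locus := N.mem_locus_of_mem_V hu
    obtain ⟨w, hw, hwv⟩ := N.exists_vertex_ge hq u
    have hw' : w ∈ N.locus := N.mem_locus_of_mem_V hw
    have hbig : ∀ x ∈ N.locus, ∀ y ∈ N.locus, dist x y ≤ dist u w := by
      intro x hx y hy
      have h1 : dist x y ≤ dist p q := isMaxOn_iff.mp hmax (x, y) ⟨hx, hy⟩
      calc dist x y ≤ dist p q := h1
        _ ≤ dist u q := hup
        _ = dist q u := dist_comm _ _
        _ ≤ dist w u := hwv
        _ = dist u w := dist_comm _ _
    have hdiam : EMetric.diam N.locus = edist u w := by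
      refine le_antisymm (EMetric.diam_le fun x hx y hy => ?_)
        (EMetric.edist_le_diam_of_mem hu' hw')
      rw [edist_dist, edist_dist]
      exact ENNReal.ofReal_le_ofReal (hbig x hx y hy)
    have hidist : idist N.locus u w = idiam N.locus := by
      refine le_antisymm (idist_le_idiam hu' hw') ?_
      calc idiam N.locus ≤ EMetric.diam N.locus := hnot
        _ = edist u w := hdiam
        _ ≤ idist N.locus u w := edist_le_idist _ _ _
    refine h u hu w hw hidist ?_
    apply segment_subset_of_idist_le hcomp.isClosed
    calc idist N.locus u w = idiam N.locus := hidist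
      _ ≤ EMetric.diam N.locus := hnot
      _ = edist u w := hdiam
  · intro hlt u hu v hv hdd hseg
    have hu' := N.mem_locus_of_mem_V hu
    have hv' := N.mem_locus_of_mem_V hv
    have hcontra : idist N.locus u v < idist N.locus u v :=
      calc idist N.locus u v ≤ edist u v := idist_le_edist_of_segment_subset hseg
        _ ≤ EMetric.diam (convexHull ℝ N.locus) :=
            EMetric.edist_le_diam_of_mem (subset_convexHull ℝ _ hu') (subset_convexHull ℝ _ hv')
        _ < idiam N.locus := hlt
        _ = idist N.locus u v := hdd.symm
    exact absurd hcontra (lt_irrefl _)
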